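/- Let Z_r be a Galton-Watson branching process with offspring distribution xi satisfying P(xi=1) = 1 - p and P(xi=2) = p for some 0 < p <= 1, started from Z_0 = 1. Then P(Z_r = 0) = 0 for all r, E(Z_r) = (1+p)^r, and for any 1 < gamma < 1+p, P(Z_r <= gamma^r) <= c*exp(-c'*r) for some positive constants c, c' depending on p and gamma. -/

import Mathlib

open MeasureTheory ProbabilityTheory


lemma gw_aux_indepFun {Ω : Type} {mΩ : MeasurableSpace Ω} {μ : Measure Ω}
    {m1 m2 : MeasurableSpace Ω} (h : Indep m1 m2 μ) {β γ : Type*}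
    [MeasurableSpace β] [MeasurableSpace γ] {f : Ω → β} {g : Ω → γ}
    (hf : Measurable[m1] f) (hg : Measurable[m2] g) : IndepFun f g μ := by
  rw [IndepFun_iff_Indep, Indep_iff]
  intro t1 t2 ht1 ht2
  obtain ⟨s1, hs1, rfl⟩ := ht1
  obtain ⟨s2, hs2, rfl⟩ := ht2
  exact (Indep_iff _ _ _).1 h _ _ (hf hs1) (hg hs2)

lemma gw_aux_meas_sum {Ω : Type} {m0 : MeasurableSpace Ω} (F : Ω → ℕ) (G : ℕ → Ω → ℕ)
    (hF : Measurable F) (hG : ∀ i, Measurable (G i)) :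
    Measurable fun ω => ∑ i ∈ Finset.range (F ω), G i ω := by
  apply measurable_to_countable'
  intro k
  have hset : (fun ω => ∑ i ∈ Finset.range (F ω), G i ω) ⁻¹' {k}
      = ⋃ n, (F ⁻¹' {n}) ∩ {ω | ∑ i ∈ Finset.range n, G i ω = k} := by
    ext ω
    simp only [Set.mem_preimage, Set.mem_singleton_iff, Set.mem_iUnion, Set.mem_inter_iff,
      Set.mem_setOf_eq]
    constructor
    · intro h; exact ⟨F ω, rfl, h⟩
    · rintro ⟨n, rfl, h⟩; exact h
  rw [hset]
  exact MeasurableSet.iUnion fun n =>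
    (hF (measurableSet_singleton n)).inter
      ((Finset.measurable_sum (Finset.range n) fun i _ => hG i) (measurableSet_singleton k))



lemma gw_iter_bound {p β ε : ℝ} (hp0 : 0 < p) (hp1 : p ≤ 1)
    (hβ1 : 1 < β) (hβp : β < 1 + p) (hε : ε = (1 + p - β) / p)
    {k r : ℕ} (hk : k ≤ r) :
    (fun x => (1 - p) * x + p * x ^ 2)^[r] (1 - ε / β ^ k) ≤ (1 - p * ε) ^ (r - k) := by
  set f : ℝ → ℝ := fun x => (1 - p) * x + p * x ^ 2 with hf
  have hε0 : 0 < ε := by rw [hε]; exact div_pos (by linarith) hp0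
  have hpε : p * ε = 1 + p - β := by rw [hε]; field_simp
  have hε1 : ε < 1 := by rw [hε, div_lt_one hp0]; linarith
  have hβk1 : (1:ℝ) ≤ β ^ k := one_le_pow₀ hβ1.le
  have hβk0 : (0:ℝ) < β ^ k := by positivity
  set u0 : ℝ := ε / β ^ k with hu0
  have hu00 : 0 < u0 := by positivity
  have hu0ε : u0 ≤ ε := div_le_self hε0.le hβk1
  set u : ℕ → ℝ := fun j => 1 - f^[j] (1 - u0) with hu
  have huz : u 0 = u0 := by simp [hu]
  have hustep : ∀ j, u (j + 1) = u j * (1 + p * (1 - u j)) := by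
    intro j
    have h : f^[j+1] (1 - u0) = f (f^[j] (1 - u0)) := Function.iterate_succ_apply' f j _
    simp only [hu]
    rw [h]
    simp only [hf]
    ring
  have hu01 : ∀ j, 0 ≤ u j ∧ u j ≤ 1 := by
    intro j
    induction j with
    | zero => rw [huz]; constructor <;> linarith
    | succ j ih =>
      rw [hustep j]
      obtain ⟨h0, h1⟩ := ih
      have hq : 0 ≤ 1 + p * (1 - u j) := by nlinarith [mul_nonneg hp0.le (sub_nonneg.2 h1)]
      have hpu : p * u j ≤ 1 := mul_le_one₀ hp1 h0 h1
      constructor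
      · exact mul_nonneg h0 hq
      · nlinarith [mul_nonneg (sub_nonneg.2 h1) (sub_nonneg.2 hpu)]
  have humono : ∀ j, u j ≤ u (j + 1) := by
    intro j
    rw [hustep j]
    obtain ⟨h0, h1⟩ := hu01 j
    nlinarith [mul_nonneg (mul_nonneg hp0.le h0) (sub_nonneg.2 h1)]
  have hA : ∀ j, min ε (u0 * β ^ j) ≤ u j := by
    intro j
    induction j with
    | zero => rw [huz]; simpa using min_le_right ε u0
    | succ j ih =>
      rcases le_or_gt ε (u j) with hc | hc
      · exact le_trans (min_le_left _ _) (le_trans hc (humono j))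
      · rcases le_total ε (u0 * β ^ j) with hd | hd
        · exfalso
          rw [min_eq_left hd] at ih
          linarith
        · rw [min_eq_right hd] at ih
          obtain ⟨h0, hle1⟩ := hu01 j
          have hfac : β ≤ 1 + p * (1 - u j) := by nlinarith
          have hb : β * u j ≤ u (j + 1) := by rw [hustep j]; nlinarith
          refine le_trans (min_le_iff.2 (Or.inr ?_)) hb
          have he : u0 * β ^ (j + 1) = β * (u0 * β ^ j) := by ring
          rw [he]
          have : 0 < β := by linarith
          nlinarith
  have huk : ε ≤ u k := by
    have he : u0 * β ^ k = ε := by rw [hu0]; field_simp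
    have h := hA k
    rw [he, min_self] at h
    exact h
  have hρ0 : 0 < 1 - p * ε := by rw [hpε]; linarith
  have hB : ∀ m, ε ≤ u (k + m) ∧ 1 - u (k + m) ≤ (1 - p * ε) ^ m := by
    intro m
    induction m with
    | zero => exact ⟨huk, by simpa using (hu01 k).1⟩
    | succ m ih =>
      obtain ⟨hε_le, hbd⟩ := ih
      obtain ⟨h0, h1⟩ := hu01 (k + m)
      have hrw : k + (m + 1) = (k + m) + 1 := by ring
      constructor
      · have := humono (k + m)
        rw [hrw]; linarith
      · rw [hrw, hustep (k + m), pow_succ]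
        have key : 1 - u (k+m) * (1 + p * (1 - u (k+m)))
            = (1 - u (k+m)) * (1 - p * u (k+m)) := by ring
        rw [key]
        have h2 : 1 - p * u (k + m) ≤ 1 - p * ε := by nlinarith
        have h3 : 0 ≤ 1 - p * u (k + m) := by nlinarith
        have h4 : (1 - u (k+m)) * (1 - p * u (k+m)) ≤ (1 - u (k+m)) * (1 - p * ε) :=
          mul_le_mul_of_nonneg_left h2 (by linarith)
        have h5 : (1 - u (k+m)) * (1 - p * ε) ≤ (1 - p * ε) ^ m * (1 - p * ε) :=
          mul_le_mul_of_nonneg_right hbd hρ0.le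
        linarith
  have hfin := (hB (r - k)).2
  rw [Nat.add_sub_cancel' hk] at hfin
  have : u r = 1 - f^[r] (1 - u0) := rfl
  linarith [hfin, this ▸ hfin]

/-- Let `Z_r` be a Galton-Watson branching process with offspring distribution `ξ`
satisfying `P(ξ = 1) = 1 - p` and `P(ξ = 2) = p` for some `0 < p ≤ 1`, started from
`Z_0 = 1` (built from an i.i.d. array `ξ (r, i)` of offspring variables).  Then
`P(Z_r = 0) = 0` for all `r`, `E(Z_r) = (1+p)^r`, and for any `1 < γ < 1 + p` there are
positive constants `c, c'` with `P(Z_r ≤ γ^r) ≤ c exp(-c' r)` for all `r`. -/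
theorem stmt_14 (Ω : Type) [MeasurableSpace Ω] (μ : Measure Ω) [IsProbabilityMeasure μ]
    (p : ℝ) (hp0 : 0 < p) (hp1 : p ≤ 1)
    (ξ : ℕ × ℕ → Ω → ℕ)
    (hmeas : ∀ q, Measurable (ξ q))
    (hind : iIndepFun ξ μ)
    (hdist1 : ∀ q, μ {ω | ξ q ω = 1} = ENNReal.ofReal (1 - p))
    (hdist2 : ∀ q, μ {ω | ξ q ω = 2} = ENNReal.ofReal p)
    (Z : ℕ → Ω → ℕ) (hZ0 : ∀ ω, Z 0 ω = 1)
    (hZ : ∀ r ω, Z (r + 1) ω = ∑ i ∈ Finset.range (Z r ω), ξ (r, i) ω) :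
    (∀ r, μ {ω | Z r ω = 0} = 0) ∧
    (∀ r, ∫ ω, (Z r ω : ℝ) ∂μ = (1 + p) ^ r) ∧
    (∀ γ : ℝ, 1 < γ → γ < 1 + p → ∃ c c' : ℝ, 0 < c ∧ 0 < c' ∧ ∀ r : ℕ,
      (μ {ω | (Z r ω : ℝ) ≤ γ ^ r}).toReal ≤ c * Real.exp (-c' * r)) := by
  classical
  set f : ℝ → ℝ := fun x => (1 - p) * x + p * x ^ 2 with hfdef
  -- a.e. each ξ is in {1, 2}
  have haeξ : ∀ᵐ ω ∂μ, ∀ q, ξ q ω = 1 ∨ ξ q ω = 2 := by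
    rw [ae_all_iff]
    intro q
    have hms1 : MeasurableSet {ω | ξ q ω = 1} := hmeas q (measurableSet_singleton 1)
    have hms2 : MeasurableSet {ω | ξ q ω = 2} := hmeas q (measurableSet_singleton 2)
    have hdisj : Disjoint {ω | ξ q ω = 1} {ω | ξ q ω = 2} := by
      rw [Set.disjoint_left]
      intro ω h1 h2
      simp only [Set.mem_setOf_eq] at h1 h2
      omega
    have hunion : μ ({ω | ξ q ω = 1} ∪ {ω | ξ q ω = 2}) = 1 := by
      rw [measure_union hdisj hms2, hdist1, hdist2, ← ENNReal.ofReal_add (by linarith) hp0.le]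
      norm_num
    have hcompl : μ ({ω | ξ q ω = 1} ∪ {ω | ξ q ω = 2})ᶜ = 0 := by
      rw [measure_compl (hms1.union hms2) (measure_ne_top _ _), hunion, measure_univ]
      simp
    rw [ae_iff]
    refine measure_mono_null (fun ω hω => ?_) hcompl
    simp only [Set.mem_setOf_eq, not_or] at hω
    simp only [Set.mem_compl_iff, Set.mem_union, Set.mem_setOf_eq, not_or]
    exact hω
  -- a.e. bounds on Z
  have haeZ : ∀ᵐ ω ∂μ, ∀ r, 1 ≤ Z r ω ∧ Z r ω ≤ 2 ^ r := by
    filter_upwards [haeξ] with ω hω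
    intro r
    induction r with
    | zero => simp [hZ0 ω]
    | succ r ih =>
      obtain ⟨h1, h2⟩ := ih
      rw [hZ r ω]
      constructor
      · calc 1 ≤ Z r ω := h1
          _ = ∑ _i ∈ Finset.range (Z r ω), 1 := by simp
          _ ≤ ∑ i ∈ Finset.range (Z r ω), ξ (r, i) ω := by
              apply Finset.sum_le_sum
              intro i _
              rcases hω (r, i) with h | h <;> omega
      · calc ∑ i ∈ Finset.range (Z r ω), ξ (r, i) ω
            ≤ ∑ _i ∈ Finset.range (Z r ω), 2 := by
              apply Finset.sum_le_sum
              intro i _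
              rcases hω (r, i) with h | h <;> omega
          _ = 2 * Z r ω := by simp [mul_comm]
          _ ≤ 2 ^ (r + 1) := by rw [pow_succ, mul_comm]; omega
  -- sigma algebras
  set m : ℕ × ℕ → MeasurableSpace Ω := fun q => MeasurableSpace.comap (ξ q) inferInstance
    with hmdef
  set M : Set (ℕ × ℕ) → MeasurableSpace Ω := fun S => ⨆ q ∈ S, m q with hMdef
  have hm_le : ∀ q, m q ≤ ‹MeasurableSpace Ω› := fun q => (hmeas q).comap_le
  have hM_le : ∀ S, M S ≤ ‹MeasurableSpace Ω› := fun S => iSup₂_le fun q _ => hm_le q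
  have hMmono : ∀ {S T : Set (ℕ × ℕ)}, S ⊆ T → M S ≤ M T := fun h => biSup_mono h
  have hmm : ∀ q, Measurable[m q] (ξ q) := fun q => Measurable.of_comap_le le_rfl
  have hmM : ∀ (S : Set (ℕ × ℕ)) q, q ∈ S → Measurable[M S] (ξ q) := by
    intro S q hq
    exact (hmm q).mono (le_biSup m hq) le_rfl
  -- Z r is measurable wrt M of past
  have hZM : ∀ r, Measurable[M {q | q.1 < r}] (Z r) := by
    intro r
    induction r with
    | zero =>
      have : Z 0 = fun _ => 1 := funext hZ0
      rw [this]
      exact measurable_const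
    | succ r ih =>
      have hZeq : Z (r + 1) = fun ω => ∑ i ∈ Finset.range (Z r ω), ξ (r, i) ω :=
        funext (hZ r)
      rw [hZeq]
      have hsub : {q : ℕ × ℕ | q.1 < r} ⊆ {q | q.1 < r + 1} := fun q hq => by
        simp only [Set.mem_setOf_eq] at *; omega
      exact gw_aux_meas_sum (m0 := M {q | q.1 < r + 1}) (Z r) (fun i => ξ (r, i))
        (ih.mono (hMmono hsub) le_rfl)
        (fun i => hmM _ (r, i) (by simp))
  have hZmeas : ∀ r, Measurable (Z r) := fun r => (hZM r).mono (hM_le _) le_rfl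
  -- independence
  have hIndep : ∀ (S : Set (ℕ × ℕ)) q, q ∉ S → Indep (M S) (m q) μ := by
    intro S q hq
    have hii : iIndep m μ := hind.iIndep
    have := indep_iSup_of_disjoint hm_le hii (Set.disjoint_singleton_right.2 hq)
    simpa [iSup_singleton] using this
  -- integrability of bounded measurable functions
  have hInt : ∀ (g : Ω → ℝ), AEStronglyMeasurable g μ → ∀ C : ℝ, (∀ ω, |g ω| ≤ C) →
      Integrable g μ := fun g hg C h =>
    ⟨hg, HasFiniteIntegral.of_bounded (C := C) (ae_of_all _ (by simpa [Real.norm_eq_abs] using h))⟩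
  -- expectation of g ∘ ξ
  have hxi_int : ∀ q (g : ℕ → ℝ), ∫ ω, g (ξ q ω) ∂μ = (1 - p) * g 1 + p * g 2 := by
    intro q g
    have hms1 : MeasurableSet {ω | ξ q ω = 1} := hmeas q (measurableSet_singleton 1)
    have hms2 : MeasurableSet {ω | ξ q ω = 2} := hmeas q (measurableSet_singleton 2)
    have hcong : (fun ω => g (ξ q ω)) =ᵐ[μ]
        fun ω => Set.indicator {ω' | ξ q ω' = 1} (fun _ => g 1) ω
          + Set.indicator {ω' | ξ q ω' = 2} (fun _ => g 2) ω := by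
      filter_upwards [haeξ] with ω hω
      rcases hω q with h | h
      · rw [Set.indicator_of_mem (by exact h), Set.indicator_of_notMem (by simp [h]), h,
          add_zero]
      · rw [Set.indicator_of_notMem (by simp [h]), Set.indicator_of_mem (by exact h), h,
          zero_add]
    rw [integral_congr_ae hcong, integral_add ((integrable_const (g 1)).indicator hms1)
      ((integrable_const (g 2)).indicator hms2), integral_indicator_const _ hms1,
      integral_indicator_const _ hms2, measureReal_def, measureReal_def, hdist1, hdist2, ENNReal.toReal_ofReal (by linarith),
      ENNReal.toReal_ofReal hp0.le, smul_eq_mul, smul_eq_mul]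
  -- the factorization lemma
  have hfac : ∀ r (A : Set Ω), MeasurableSet[M {q | q.1 < r}] A → ∀ (g : ℕ → ℝ),
      (∀ n, 0 ≤ g n) → (∀ n, g n ≤ 1) → ∀ (t : Finset ℕ),
      ∫ ω, Set.indicator A (fun _ => (1:ℝ)) ω * ∏ i ∈ t, g (ξ (r, i) ω) ∂μ
        = (μ A).toReal * ((1 - p) * g 1 + p * g 2) ^ t.card := by
    intro r A hA g hg0 hg1 t
    have hAmeas : MeasurableSet A := hM_le _ _ hA
    induction t using Finset.induction with
    | empty =>
      simp only [Finset.prod_empty, mul_one, Finset.card_empty, pow_zero]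
      rw [integral_indicator_const _ hAmeas, smul_eq_mul, mul_one, measureReal_def]
    | @insert j t hj ih =>
      have hop : (fun ω => Set.indicator A (fun _ => (1:ℝ)) ω * ∏ i ∈ insert j t, g (ξ (r,i) ω))
          = (fun ω => Set.indicator A (fun _ => (1:ℝ)) ω * ∏ i ∈ t, g (ξ (r,i) ω))
            * (fun ω => g (ξ (r,j) ω)) := by
        funext ω
        simp only [Pi.mul_apply]
        rw [Finset.prod_insert hj]
        ring
      set S : Set (ℕ × ℕ) := {q | q.1 < r} ∪ (fun i => (r, i)) '' ↑t with hSdef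
      have hjS : (r, j) ∉ S := by
        intro hmem
        rcases hmem with hmem | hmem
        · simp only [Set.mem_setOf_eq] at hmem; omega
        · obtain ⟨i, hi, heq⟩ := hmem
          have : i = j := by
            have := congrArg Prod.snd heq
            simpa using this
          rw [this] at hi
          exact hj hi
      have hFmeas : Measurable[M S] (fun ω =>
          Set.indicator A (fun _ => (1:ℝ)) ω * ∏ i ∈ t, g (ξ (r,i) ω)) := by
        apply Measurable.mul
        · exact (@measurable_const ℝ Ω _ (M S) 1).indicator
            (hMmono Set.subset_union_left _ hA)
        · apply Finset.measurable_prod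
          intro i hi
          exact measurable_from_nat.comp
            (hmM S (r, i) (Or.inr ⟨i, by simpa using hi, rfl⟩))
      have hGmeas : Measurable[m (r, j)] (fun ω => g (ξ (r, j) ω)) :=
        measurable_from_nat.comp (hmm (r, j))
      have hIF : IndepFun (fun ω => Set.indicator A (fun _ => (1:ℝ)) ω * ∏ i ∈ t, g (ξ (r,i) ω))
          (fun ω => g (ξ (r, j) ω)) μ :=
        gw_aux_indepFun (hIndep S (r, j) hjS) hFmeas hGmeas
      have hres := hIF.integral_mul_eq_mul_integral
        ((hFmeas.mono (hM_le S) le_rfl).aestronglyMeasurable)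
        ((hGmeas.mono (hm_le (r, j)) le_rfl).aestronglyMeasurable)
      rw [hop]
      rw [hres, ih, hxi_int (r, j) g, Finset.card_insert_of_notMem hj, pow_succ]
      ring
  -- decomposition over values of Z r
  have hdecomp : ∀ r (g : ℕ → ℝ), ∫ ω, g (Z r ω) ∂μ
      = ∑ n ∈ Finset.range (2 ^ r + 1), (μ {ω | Z r ω = n}).toReal * g n := by
    intro r g
    have hmsn : ∀ n : ℕ, MeasurableSet {ω | Z r ω = n} := fun n =>
      hZmeas r (measurableSet_singleton n)
    have hcong : (fun ω => g (Z r ω)) =ᵐ[μ] fun ω =>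
        ∑ n ∈ Finset.range (2 ^ r + 1), Set.indicator {ω' | Z r ω' = n} (fun _ => g n) ω := by
      filter_upwards [haeZ] with ω hω
      obtain ⟨h1, h2⟩ := hω r
      rw [Finset.sum_eq_single (Z r ω)]
      · rw [Set.indicator_of_mem (by exact rfl)]
      · intro n hn hne
        exact Set.indicator_of_notMem (fun h => hne (by exact h.symm ▸ rfl)) _
      · intro h
        exact absurd (Finset.mem_range.2 (by omega)) h
    rw [integral_congr_ae hcong,
      integral_finset_sum _ (fun n _ => (integrable_const (g n)).indicator (hmsn n))]
    refine Finset.sum_congr rfl fun n _ => ?_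
    rw [integral_indicator_const _ (hmsn n), smul_eq_mul, measureReal_def]
  refine ⟨?_, ?_, ?_⟩
  · -- no deaths
    intro r
    have h : ∀ᵐ ω ∂μ, Z r ω ≠ 0 := haeZ.mono fun ω hω => by have := (hω r).1; omega
    have h2 := ae_iff.1 h
    simpa only [ne_eq, not_not] using h2
  · -- expectation
    intro r
    induction r with
    | zero =>
      have : (fun ω => (Z 0 ω : ℝ)) = fun _ => (1:ℝ) := by
        funext ω; rw [hZ0 ω]; norm_num
      rw [this]
      simp
    | succ r ih =>
      set g2 : ℕ → ℝ := fun n => min (n : ℝ) 2 / 2 with hg2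
      have hg20 : ∀ n, 0 ≤ g2 n := fun n => by
        rw [hg2]
        have : (0:ℝ) ≤ min (n:ℝ) 2 := le_min (by positivity) (by norm_num)
        linarith
      have hg21 : ∀ n, g2 n ≤ 1 := fun n => by
        rw [hg2]
        have := min_le_right (n:ℝ) 2
        simp only
        linarith
      have hval : (1 - p) * g2 1 + p * g2 2 = (1 + p) / 2 := by
        rw [hg2]
        norm_num
        ring
      have hcong : (fun ω => (Z (r+1) ω : ℝ)) =ᵐ[μ] fun ω =>
          ∑ n ∈ Finset.range (2^r+1), Set.indicator {ω' | Z r ω' = n} (fun _ => (1:ℝ)) ω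
            * (2 * ∑ i ∈ Finset.range n, g2 (ξ (r,i) ω)) := by
        filter_upwards [haeξ, haeZ] with ω hξω hZω
        obtain ⟨h1, h2⟩ := hZω r
        rw [Finset.sum_eq_single (Z r ω)]
        · rw [Set.indicator_of_mem (by exact rfl), one_mul, hZ r ω]
          push_cast
          rw [Finset.mul_sum]
          refine Finset.sum_congr rfl fun i _ => ?_
          rcases hξω (r, i) with h | h <;> rw [h] <;> rw [hg2] <;> norm_num
        · intro n hn hne
          rw [Set.indicator_of_notMem (fun h => hne (by exact h.symm ▸ rfl)), zero_mul]
        · intro h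
          exact absurd (Finset.mem_range.2 (by omega)) h
      have hterm_meas : ∀ n i, Measurable fun ω =>
          Set.indicator {ω' | Z r ω' = n} (fun _ => (1:ℝ)) ω * g2 (ξ (r,i) ω) := by
        intro n i
        exact (measurable_const.indicator (hZmeas r (measurableSet_singleton n))).mul
          ((measurable_from_nat (f := g2)).comp (hmeas (r, i)))
      have hterm_int : ∀ n i, Integrable (fun ω =>
          2 * (Set.indicator {ω' | Z r ω' = n} (fun _ => (1:ℝ)) ω * g2 (ξ (r,i) ω))) μ := by
        intro n i
        refine hInt _ (measurable_const.mul (hterm_meas n i)).aestronglyMeasurable 2 fun ω => ?_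
        have h0 : (0:ℝ) ≤ Set.indicator {ω' | Z r ω' = n} (fun _ => (1:ℝ)) ω :=
          Set.indicator_nonneg (fun _ _ => zero_le_one) ω
        have h1 : Set.indicator {ω' | Z r ω' = n} (fun _ => (1:ℝ)) ω ≤ 1 :=
          Set.indicator_apply_le' (fun _ => le_rfl) (fun _ => zero_le_one)
        have hb0 := hg20 (ξ (r,i) ω)
        have hb1 := hg21 (ξ (r,i) ω)
        rw [abs_of_nonneg (mul_nonneg (by norm_num) (mul_nonneg h0 hb0))]
        nlinarith
      have hstep : ∫ ω, (Z (r+1) ω : ℝ) ∂μ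
          = ∑ n ∈ Finset.range (2^r+1), (μ {ω | Z r ω = n}).toReal * ((1+p) * n) := by
        rw [integral_congr_ae hcong]
        rw [integral_finset_sum]
        · refine Finset.sum_congr rfl fun n hn => ?_
          have hAmeasM : MeasurableSet[M {q | q.1 < r}] {ω | Z r ω = n} :=
            hZM r (measurableSet_singleton n)
          have hre : (fun ω => Set.indicator {ω' | Z r ω' = n} (fun _ => (1:ℝ)) ω
              * (2 * ∑ i ∈ Finset.range n, g2 (ξ (r,i) ω)))
              = fun ω => ∑ i ∈ Finset.range n,
                  2 * (Set.indicator {ω' | Z r ω' = n} (fun _ => (1:ℝ)) ω * g2 (ξ (r,i) ω)) := by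
            funext ω
            rw [Finset.mul_sum, Finset.mul_sum]
            refine Finset.sum_congr rfl fun i _ => ?_
            ring
          rw [hre, integral_finset_sum _ (fun i _ => hterm_int n i)]
          have hone : ∀ i, ∫ ω, Set.indicator {ω' | Z r ω' = n} (fun _ => (1:ℝ)) ω
              * g2 (ξ (r,i) ω) ∂μ = (μ {ω | Z r ω = n}).toReal * ((1+p)/2) := by
            intro i
            have := hfac r {ω | Z r ω = n} hAmeasM g2 hg20 hg21 {i}
            rw [Finset.card_singleton, pow_one, hval] at this
            simp only [Finset.prod_singleton] at this
            exact this
          have : ∀ i ∈ Finset.range n, ∫ ω,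
              2 * (Set.indicator {ω' | Z r ω' = n} (fun _ => (1:ℝ)) ω * g2 (ξ (r,i) ω)) ∂μ
              = 2 * ((μ {ω | Z r ω = n}).toReal * ((1+p)/2)) := by
            intro i _
            rw [integral_const_mul, hone i]
          rw [Finset.sum_congr rfl this, Finset.sum_const, Finset.card_range]
          push_cast
          ring
        · intro n _
          refine hInt _ ?_ (2 * n) fun ω => ?_
          · refine Measurable.aestronglyMeasurable ?_
            exact (measurable_const.indicator (hZmeas r (measurableSet_singleton n))).mul
              (measurable_const.mul (Finset.measurable_sum _ fun i _ =>
                (measurable_from_nat (f := g2)).comp (hmeas (r, i))))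
          · have h0 : (0:ℝ) ≤ Set.indicator {ω' | Z r ω' = n} (fun _ => (1:ℝ)) ω :=
              Set.indicator_nonneg (fun _ _ => zero_le_one) ω
            have h1 : Set.indicator {ω' | Z r ω' = n} (fun _ => (1:ℝ)) ω ≤ 1 :=
              Set.indicator_apply_le' (fun _ => le_rfl) (fun _ => zero_le_one)
            have hsum0 : (0:ℝ) ≤ ∑ i ∈ Finset.range n, g2 (ξ (r,i) ω) :=
              Finset.sum_nonneg fun i _ => hg20 _
            have hsum1 : ∑ i ∈ Finset.range n, g2 (ξ (r,i) ω) ≤ n := by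
              calc ∑ i ∈ Finset.range n, g2 (ξ (r,i) ω) ≤ ∑ _i ∈ Finset.range n, (1:ℝ) :=
                    Finset.sum_le_sum fun i _ => hg21 _
                _ = n := by simp
            rw [abs_mul, abs_of_nonneg h0, abs_mul, abs_of_nonneg hsum0]
            have : |(2:ℝ)| = 2 := by norm_num
            rw [this]
            nlinarith
      rw [hstep]
      have hid : ∑ n ∈ Finset.range (2^r+1), (μ {ω | Z r ω = n}).toReal * ((1+p) * n)
          = ∫ ω, (1+p) * (Z r ω : ℝ) ∂μ := (hdecomp r (fun n => (1+p) * n)).symm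
      rw [hid, integral_const_mul, ih, pow_succ]
      ring
  · -- lower deviations
    intro γ hγ1 hγp
    have hGF : ∀ r (s : ℝ), 0 ≤ s → s ≤ 1 → ∫ ω, s ^ Z r ω ∂μ = f^[r] s := by
      intro r
      induction r with
      | zero =>
        intro s hs0 hs1
        have heq : (fun ω => s ^ Z 0 ω) = fun _ => s := by
          funext ω; rw [hZ0 ω, pow_one]
        rw [heq, Function.iterate_zero_apply]
        simp
      | succ r ihr =>
        intro s hs0 hs1
        have hfseq : f s = (1 - p) * s + p * s ^ 2 := rfl
        have hfs0 : 0 ≤ f s := by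
          rw [hfseq]
          nlinarith [mul_nonneg hp0.le (sq_nonneg s),
            mul_nonneg (show (0:ℝ) ≤ 1 - p by linarith) hs0]
        have hfs1 : f s ≤ 1 := by
          rw [hfseq]
          nlinarith [pow_le_one₀ hs0 hs1 (n := 2),
            mul_le_mul_of_nonneg_left hs1 (show (0:ℝ) ≤ 1 - p by linarith),
            mul_le_mul_of_nonneg_left (pow_le_one₀ hs0 hs1 (n := 2)) hp0.le]
        have hcong : (fun ω => s ^ Z (r+1) ω) =ᵐ[μ] fun ω =>
            ∑ n ∈ Finset.range (2^r+1), Set.indicator {ω' | Z r ω' = n} (fun _ => (1:ℝ)) ω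
              * ∏ i ∈ Finset.range n, s ^ ξ (r,i) ω := by
          filter_upwards [haeZ] with ω hω
          obtain ⟨h1, h2⟩ := hω r
          rw [Finset.sum_eq_single (Z r ω)]
          · rw [Set.indicator_of_mem (by exact rfl), one_mul, hZ r ω,
              Finset.prod_pow_eq_pow_sum]
          · intro n hn hne
            rw [Set.indicator_of_notMem (fun h => hne (by exact h.symm ▸ rfl)), zero_mul]
          · intro h; exact absurd (Finset.mem_range.2 (by omega)) h
        have hgpow0 : ∀ n : ℕ, 0 ≤ s ^ n := fun n => pow_nonneg hs0 n
        have hgpow1 : ∀ n : ℕ, s ^ n ≤ 1 := fun n => pow_le_one₀ hs0 hs1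
        rw [integral_congr_ae hcong, integral_finset_sum]
        · have heach : ∀ n ∈ Finset.range (2^r+1),
              (∫ ω, Set.indicator {ω' | Z r ω' = n} (fun _ => (1:ℝ)) ω
                * ∏ i ∈ Finset.range n, s ^ ξ (r,i) ω ∂μ)
              = (μ {ω | Z r ω = n}).toReal * (f s) ^ n := by
            intro n _
            have hh := hfac r {ω | Z r ω = n} (hZM r (measurableSet_singleton n))
              (fun k => s ^ k) hgpow0 hgpow1 (Finset.range n)
            rw [Finset.card_range] at hh
            rw [hh, hfdef]
            norm_num
          rw [Finset.sum_congr rfl heach]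
          have hdd := hdecomp r (fun n => (f s)^n)
          rw [← hdd, Function.iterate_succ_apply, ihr (f s) hfs0 hfs1]
        · intro n _
          refine hInt _ ?_ 1 fun ω => ?_
          · refine Measurable.aestronglyMeasurable ?_
            exact (measurable_const.indicator (hZmeas r (measurableSet_singleton n))).mul
              (Finset.measurable_prod _ fun i _ =>
                (measurable_from_nat (f := fun k => s ^ k)).comp (hmeas (r, i)))
          · have h0 : (0:ℝ) ≤ Set.indicator {ω' | Z r ω' = n} (fun _ => (1:ℝ)) ω :=
              Set.indicator_nonneg (fun _ _ => zero_le_one) ω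
            have h1 : Set.indicator {ω' | Z r ω' = n} (fun _ => (1:ℝ)) ω ≤ 1 :=
              Set.indicator_apply_le' (fun _ => le_rfl) (fun _ => zero_le_one)
            have hp0' : (0:ℝ) ≤ ∏ i ∈ Finset.range n, s ^ ξ (r,i) ω :=
              Finset.prod_nonneg fun i _ => hgpow0 _
            have hp1' : (∏ i ∈ Finset.range n, s ^ ξ (r,i) ω) ≤ 1 :=
              Finset.prod_le_one (fun i _ => hgpow0 _) (fun i _ => hgpow1 _)
            rw [abs_of_nonneg (mul_nonneg h0 hp0')]
            nlinarith
    -- constants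
    have h1p : (1:ℝ) < 1 + p := by linarith
    have hγ0 : (0:ℝ) < γ := by linarith
    set β : ℝ := Real.sqrt (γ * (1 + p)) with hβdef
    have hβ0 : (0:ℝ) ≤ β := Real.sqrt_nonneg _
    have hβsq : β ^ 2 = γ * (1 + p) := Real.sq_sqrt (by positivity)
    have hβγ : γ < β := by
      nlinarith [mul_pos hγ0 (show (0:ℝ) < 1 + p - γ by linarith)]
    have hβp' : β < 1 + p := by
      nlinarith [mul_pos (show (0:ℝ) < 1 + p by linarith) (show (0:ℝ) < 1 + p - γ by linarith)]
    have hβ1 : 1 < β := lt_trans hγ1 hβγ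
    set ε : ℝ := (1 + p - β) / p with hεdef
    have hε0 : 0 < ε := div_pos (by linarith) hp0
    have hpε : p * ε = 1 + p - β := by rw [hεdef]; field_simp
    have hε1 : ε < 1 := by rw [hεdef, div_lt_one hp0]; linarith
    set ρ : ℝ := 1 - p * ε with hρdef
    have hρ0 : 0 < ρ := by rw [hρdef, hpε]; linarith
    have hρ1 : ρ < 1 := by rw [hρdef]; nlinarith
    have hlogρ : Real.log ρ < 0 := Real.log_neg hρ0 hρ1
    set θ : ℝ := Real.log γ / Real.log β with hθdef
    have hlogβ : 0 < Real.log β := Real.log_pos hβ1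
    have hlogγ : 0 < Real.log γ := Real.log_pos hγ1
    have hθ0 : 0 < θ := div_pos hlogγ hlogβ
    have hθ1 : θ < 1 := (div_lt_one hlogβ).2 (Real.log_lt_log hγ0 hβγ)
    refine ⟨1 / ((1 - ε) * ρ), (1 - θ) * (-Real.log ρ),
      div_pos one_pos (mul_pos (by linarith) hρ0),
      mul_pos (by linarith) (by linarith), ?_⟩
    intro r
    set k := ⌈θ * r⌉₊ with hkdef
    have hkr : k ≤ r := by
      rw [hkdef, Nat.ceil_le]
      calc θ * r ≤ 1 * r := mul_le_mul_of_nonneg_right hθ1.le (Nat.cast_nonneg r)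
        _ = r := one_mul _
    have hkθ : θ * r ≤ k := Nat.le_ceil _
    have hklt : (k:ℝ) < θ * r + 1 := Nat.ceil_lt_add_one (by positivity)
    have hβk0 : (0:ℝ) < β ^ k := by positivity
    have hβk1 : (1:ℝ) ≤ β ^ k := one_le_pow₀ hβ1.le
    set s : ℝ := 1 - ε / β ^ k with hsdef
    have hu0pos : 0 < ε / β ^ k := div_pos hε0 hβk0
    have hu0ε : ε / β ^ k ≤ ε := div_le_self hε0.le hβk1
    have hs0 : 0 < s := by rw [hsdef]; linarith
    have hs1 : s ≤ 1 := by rw [hsdef]; linarith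
    have hGFr : ∫ ω, s ^ Z r ω ∂μ ≤ ρ ^ (r - k) := by
      rw [hGF r s hs0.le hs1, hfdef, hsdef, hρdef]
      exact gw_iter_bound hp0 hp1 hβ1 hβp' hεdef hkr
    have hZri : Integrable (fun ω => s ^ Z r ω) μ :=
      hInt _ ((measurable_from_nat (f := fun n => s ^ n)).comp (hZmeas r)).aestronglyMeasurable 1
        (fun ω => by
          rw [abs_of_nonneg (pow_nonneg hs0.le _)]
          exact pow_le_one₀ hs0.le hs1)
    have hevt : MeasurableSet {ω | (Z r ω : ℝ) ≤ γ ^ r} :=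
      measurableSet_le ((measurable_from_nat (f := fun n => (n:ℝ))).comp (hZmeas r))
        measurable_const
    have hmark : (μ {ω | (Z r ω : ℝ) ≤ γ ^ r}).toReal * s ^ ((γ:ℝ) ^ r : ℝ)
        ≤ ∫ ω, s ^ Z r ω ∂μ := by
      have hle : ∀ ω, Set.indicator {ω' | (Z r ω' : ℝ) ≤ γ ^ r}
          (fun _ => s ^ ((γ:ℝ) ^ r : ℝ)) ω ≤ s ^ Z r ω := by
        intro ω
        by_cases hω : (Z r ω : ℝ) ≤ γ ^ r
        · rw [Set.indicator_of_mem (show ω ∈ {ω' | (Z r ω' : ℝ) ≤ γ ^ r} from hω)]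
          calc s ^ ((γ:ℝ) ^ r : ℝ) ≤ s ^ ((Z r ω : ℕ) : ℝ) :=
                Real.rpow_le_rpow_of_exponent_ge hs0 hs1 hω
            _ = s ^ Z r ω := Real.rpow_natCast s (Z r ω)
        · rw [Set.indicator_of_notMem (show ω ∉ {ω' | (Z r ω' : ℝ) ≤ γ ^ r} from hω)]
          exact pow_nonneg hs0.le _
      have hii : Integrable (Set.indicator {ω' | (Z r ω' : ℝ) ≤ γ ^ r}
          (fun _ => s ^ ((γ:ℝ) ^ r : ℝ))) μ := (integrable_const _).indicator hevt
      have hmono := integral_mono hii hZri hle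
      rwa [integral_indicator_const _ hevt, smul_eq_mul, measureReal_def] at hmono
    have hβkγ : γ ^ r ≤ β ^ k := by
      have h2 : Real.log (γ ^ r) ≤ Real.log (β ^ k) := by
        rw [Real.log_pow, Real.log_pow]
        have heq : (r:ℝ) * Real.log γ = (θ * r) * Real.log β := by
          rw [hθdef]; field_simp
        rw [heq]
        exact mul_le_mul_of_nonneg_right hkθ hlogβ.le
      exact (Real.log_le_log_iff (by positivity) (by positivity)).1 h2
    have hrpow_ge : 1 - ε ≤ s ^ ((γ:ℝ) ^ r : ℝ) := by
      have hber := one_add_mul_self_le_rpow_one_add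
        (show (-1:ℝ) ≤ -(ε / β ^ k) by linarith)
        (show (1:ℝ) ≤ γ ^ r from one_le_pow₀ hγ1.le)
      have heq : (1 + -(ε / β ^ k)) = s := by rw [hsdef]; ring
      rw [heq] at hber
      have hfrac : γ ^ r * (ε / β ^ k) ≤ ε := by
        have hdd : γ ^ r / β ^ k ≤ 1 := (div_le_one hβk0).2 hβkγ
        calc γ ^ r * (ε / β ^ k) = ε * (γ ^ r / β ^ k) := by ring
          _ ≤ ε * 1 := mul_le_mul_of_nonneg_left hdd hε0.le
          _ = ε := mul_one ε
      linarith [hber, hfrac]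
    have hfinal : (μ {ω | (Z r ω : ℝ) ≤ γ ^ r}).toReal ≤ ρ ^ (r - k) / (1 - ε) := by
      have hμ0 : (0:ℝ) ≤ (μ {ω | (Z r ω : ℝ) ≤ γ ^ r}).toReal := ENNReal.toReal_nonneg
      have h1 : (μ {ω | (Z r ω : ℝ) ≤ γ ^ r}).toReal * (1 - ε)
          ≤ (μ {ω | (Z r ω : ℝ) ≤ γ ^ r}).toReal * s ^ ((γ:ℝ) ^ r : ℝ) :=
        mul_le_mul_of_nonneg_left hrpow_ge hμ0
      have h2 := le_trans h1 (le_trans hmark hGFr)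
      rw [le_div_iff₀ (by linarith)]
      exact h2
    have hexp : ρ ^ (r - k) ≤ ρ⁻¹ * Real.exp (-((1 - θ) * (-Real.log ρ)) * r) := by
      have hcast : ((r - k : ℕ) : ℝ) = (r : ℝ) - k := by
        rw [Nat.cast_sub hkr]
      have hρpow : ρ ^ (r - k) = Real.exp (((r:ℝ) - (k:ℝ)) * Real.log ρ) := by
        rw [← hcast, ← Real.exp_log hρ0, ← Real.exp_nat_mul, Real.log_exp]
      have hge : ((1 - θ) * r - 1) ≤ ((r:ℝ) - k) := by linarith
      have hmul : (((r:ℝ) - k)) * Real.log ρ ≤ ((1 - θ) * r - 1) * Real.log ρ :=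
        mul_le_mul_of_nonpos_right hge hlogρ.le
      calc ρ ^ (r - k) = Real.exp (((r:ℝ) - (k:ℝ)) * Real.log ρ) := hρpow
        _ ≤ Real.exp (((1 - θ) * r - 1) * Real.log ρ) := Real.exp_le_exp.2 hmul
        _ = ρ⁻¹ * Real.exp (-((1 - θ) * (-Real.log ρ)) * r) := by
            rw [show ((1 - θ) * r - 1) * Real.log ρ
              = (-Real.log ρ) + (-((1 - θ) * (-Real.log ρ)) * r) by ring,
              Real.exp_add, Real.exp_neg, Real.exp_log hρ0]
    calc (μ {ω | (Z r ω : ℝ) ≤ γ ^ r}).toReal ≤ ρ ^ (r - k) / (1 - ε) := hfinal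
      _ ≤ (ρ⁻¹ * Real.exp (-((1 - θ) * (-Real.log ρ)) * r)) / (1 - ε) :=
          (div_le_div_iff_of_pos_right (show (0:ℝ) < 1 - ε by linarith)).2 hexp
      _ = 1 / ((1 - ε) * ρ) * Real.exp (-((1 - θ) * (-Real.log ρ)) * r) := by
          field_simp
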